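/- Let u ∈ ℝ^d be a unit vector with d ≥ 4·64. There exists a subset B of the binary cube {−1,1}^d such that: (i) card(B) ≥ e^{d/8}/2; (ii) |⟨u,ω⟩| < 2 for all ω ∈ B; (iii) the Hamming distance satisfies h(ω,ω') ≥ d/4 for all distinct ω, ω' ∈ B. -/

import Mathlib

open Finset

noncomputable def vgSigma (d : ℕ) (x : Fin d → Bool) : Fin d → ℝ := fun j => if x j then 1 else -1

lemma vgSigma_sq (d : ℕ) (x : Fin d → Bool) (j : Fin d) : vgSigma d x j * vgSigma d x j = 1 := by
  unfold vgSigma; split <;> norm_num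

lemma vg_orth (d : ℕ) (j k : Fin d) (hjk : j ≠ k) :
    ∑ x : Fin d → Bool, vgSigma d x j * vgSigma d x k = 0 := by
  classical
  apply Finset.sum_ninvolution (fun x => Function.update x j (!x j))
  · intro x
    have h1 : Function.update x j (!x j) j = !x j := Function.update_self _ _ _
    have h2 : Function.update x j (!x j) k = x k := Function.update_of_ne (Ne.symm hjk) _ _
    unfold vgSigma
    rw [h1, h2]
    cases x j <;> simp <;> split <;> norm_num
  · intro x _
    intro h
    have := congrFun h j
    rw [Function.update_self] at this
    cases hx : x j <;> rw [hx] at this <;> simp at this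
  · intro x; exact Finset.mem_univ _
  · intro x
    funext i
    by_cases hi : i = j
    · subst hi; simp [Function.update_self]
    · simp [Function.update_of_ne hi]

lemma vg_second_moment (d : ℕ) (u : Fin d → ℝ) :
    ∑ x : Fin d → Bool, (∑ j, u j * vgSigma d x j) ^ 2 = 2 ^ d * ∑ j, u j ^ 2 := by
  classical
  have expand : ∀ x : Fin d → Bool, (∑ j, u j * vgSigma d x j) ^ 2
      = ∑ j, ∑ k, (u j * u k) * (vgSigma d x j * vgSigma d x k) := by
    intro x
    rw [sq, Finset.sum_mul_sum]
    apply Finset.sum_congr rfl; intro j _; apply Finset.sum_congr rfl; intro k _; ring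
  simp_rw [expand]
  rw [Finset.sum_comm]
  have : ∀ j : Fin d, ∑ x : Fin d → Bool, ∑ k, (u j * u k) * (vgSigma d x j * vgSigma d x k)
      = 2 ^ d * u j ^ 2 := by
    intro j
    rw [Finset.sum_comm]
    rw [Finset.sum_eq_single j]
    · simp_rw [vgSigma_sq, mul_one, Finset.sum_const]
      simp [Fintype.card_fun, sq]
    · intro k _ hkj
      rw [← Finset.mul_sum, vg_orth d j k (Ne.symm hkj), mul_zero]
    · simp
  simp_rw [this]
  rw [← Finset.mul_sum]

def vgD (d : ℕ) (x y : Fin d → Bool) : ℕ := (univ.filter fun j => x j ≠ y j).card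

lemma vgD_symm (d : ℕ) (x y : Fin d → Bool) : vgD d x y = vgD d y x := by
  unfold vgD; congr 1; apply Finset.filter_congr; intro j _; simp [ne_comm]

lemma vg_good_card (d : ℕ) (u : Fin d → ℝ) (hu : ∑ j, u j ^ 2 = 1)
    (htot : ∑ x : Fin d → Bool, (∑ j, u j * vgSigma d x j) ^ 2 = 2 ^ d * ∑ j, u j ^ 2) :
    3 / 4 * 2 ^ d ≤
      ((univ.filter fun x : Fin d → Bool => |∑ j, u j * vgSigma d x j| < 2).card : ℝ) := by
  classical
  set f := fun x : Fin d → Bool => ∑ j, u j * vgSigma d x j with hf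
  rw [hu, mul_one] at htot
  set G := univ.filter fun x : Fin d → Bool => |f x| < 2 with hG
  set Bad := univ.filter fun x : Fin d → Bool => ¬ |f x| < 2 with hBad
  have hbad : 4 * ((Bad.card : ℝ)) ≤ 2 ^ d := by
    rw [← htot]
    calc 4 * (Bad.card : ℝ) = ∑ _x ∈ Bad, (4 : ℝ) := by rw [Finset.sum_const]; ring
    _ ≤ ∑ x ∈ Bad, f x ^ 2 := by
        apply Finset.sum_le_sum
        intro x hx
        rw [hBad, Finset.mem_filter] at hx
        have h2 : 2 ≤ |f x| := not_lt.mp hx.2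
        calc (4:ℝ) = 2 ^ 2 := by norm_num
        _ ≤ |f x| ^ 2 := by apply pow_le_pow_left₀ (by norm_num) h2
        _ = f x ^ 2 := sq_abs _
    _ ≤ ∑ x : Fin d → Bool, f x ^ 2 := by
        apply Finset.sum_le_sum_of_subset_of_nonneg (Finset.filter_subset _ _)
        intro x _ _; positivity
  have hsplit : (G.card : ℝ) + Bad.card = 2 ^ d := by
    rw [hG, hBad]
    have := Finset.card_filter_add_card_filter_not
      (s := (univ : Finset (Fin d → Bool))) (p := fun x => |f x| < 2)
    have hcard : (univ : Finset (Fin d → Bool)).card = 2 ^ d := by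
      simp [Fintype.card_fun]
    rw [hcard] at this
    exact_mod_cast this
  linarith

lemma vg_ball_card (d : ℕ) (x : Fin d → Bool) :
    (univ.filter fun y : Fin d → Bool => 4 * vgD d x y < d).card ≤
      ∑ k ∈ (range (d + 1)).filter fun k => 4 * k < d, d.choose k := by
  classical
  set K := (range (d + 1)).filter fun k => 4 * k < d with hK
  set T := K.biUnion fun k => Finset.powersetCard k (univ : Finset (Fin d)) with hT
  have hinj : (univ.filter fun y : Fin d → Bool => 4 * vgD d x y < d).card ≤ T.card := by
    apply Finset.card_le_card_of_injOn (fun y => univ.filter fun j => x j ≠ y j)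
    · intro y hy
      rw [Finset.mem_coe, Finset.mem_filter] at hy
      rw [Finset.mem_coe, hT, Finset.mem_biUnion]
      refine ⟨vgD d x y, ?_, ?_⟩
      · rw [hK, Finset.mem_filter, Finset.mem_range]
        constructor
        · have : vgD d x y ≤ d := by
            unfold vgD
            calc _ ≤ (univ : Finset (Fin d)).card := Finset.card_le_card (Finset.filter_subset _ _)
            _ = d := by simp
          omega
        · exact hy.2
      · rw [Finset.mem_powersetCard]
        exact ⟨Finset.subset_univ _, rfl⟩
    · intro y _ y' _ h
      funext j
      have h' : (univ.filter fun j => x j ≠ y j) = univ.filter fun j => x j ≠ y' j := h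
      have hj : (x j ≠ y j) ↔ (x j ≠ y' j) := by
        constructor
        · intro hxy
          have hm : j ∈ univ.filter fun j => x j ≠ y j := by simp [hxy]
          rw [h'] at hm
          simpa using hm
        · intro hxy
          have hm : j ∈ univ.filter fun j => x j ≠ y' j := by simp [hxy]
          rw [← h'] at hm
          simpa using hm
      cases hy : y j <;> cases hy' : y' j <;> cases hxj : x j <;> simp [hy, hy', hxj] at hj ⊢
  refine hinj.trans ?_
  refine (Finset.card_biUnion_le).trans ?_
  apply Finset.sum_le_sum
  intro k _
  rw [Finset.card_powersetCard]
  simp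

lemma vg_sum_choose (d : ℕ) :
    ((∑ k ∈ (range (d + 1)).filter fun k => 4 * k < d, d.choose k : ℕ) : ℝ) ≤
      (3 : ℝ) ^ ((d : ℝ) / 4) * (4 / 3) ^ d := by
  push_cast
  have step1 : ∑ k ∈ (range (d + 1)).filter (fun k => 4 * k < d), (d.choose k : ℝ)
      ≤ (3 : ℝ) ^ ((d : ℝ) / 4) * ∑ k ∈ range (d + 1), (d.choose k : ℝ) * (1 / 3) ^ k := by
    calc ∑ k ∈ (range (d + 1)).filter (fun k => 4 * k < d), (d.choose k : ℝ)
        ≤ ∑ k ∈ (range (d + 1)).filter (fun k => 4 * k < d),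
            (3 : ℝ) ^ ((d : ℝ) / 4) * ((d.choose k : ℝ) * (1 / 3) ^ k) := by
          apply Finset.sum_le_sum
          intro k hk
          rw [Finset.mem_filter] at hk
          have hk4 : (k : ℝ) ≤ (d : ℝ) / 4 := by
            have h4 : (4 : ℝ) * k < d := by exact_mod_cast hk.2
            linarith
          have h3k : (3 : ℝ) ^ k ≤ (3 : ℝ) ^ ((d : ℝ) / 4) := by
            rw [← Real.rpow_natCast 3 k]
            exact Real.rpow_le_rpow_of_exponent_le (by norm_num) hk4
          calc (d.choose k : ℝ) = (3 : ℝ) ^ k * ((d.choose k : ℝ) * (1 / 3) ^ k) := by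
                field_simp
                rw [mul_assoc, ← mul_pow]; norm_num
          _ ≤ (3 : ℝ) ^ ((d : ℝ) / 4) * ((d.choose k : ℝ) * (1 / 3) ^ k) := by
                apply mul_le_mul_of_nonneg_right h3k
                positivity
      _ = (3 : ℝ) ^ ((d : ℝ) / 4) * ∑ k ∈ (range (d + 1)).filter (fun k => 4 * k < d),
            (d.choose k : ℝ) * (1 / 3) ^ k := by rw [Finset.mul_sum]
      _ ≤ (3 : ℝ) ^ ((d : ℝ) / 4) * ∑ k ∈ range (d + 1), (d.choose k : ℝ) * (1 / 3) ^ k := by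
          apply mul_le_mul_of_nonneg_left _ (by positivity)
          apply Finset.sum_le_sum_of_subset_of_nonneg (Finset.filter_subset _ _)
          intro k _ _
          positivity
  have step2 : ∑ k ∈ range (d + 1), (d.choose k : ℝ) * (1 / 3) ^ k = (4 / 3) ^ d := by
    have := add_pow (1 / 3 : ℝ) 1 d
    simp only [one_pow, mul_one] at this
    rw [show (4 / 3 : ℝ) = 1 / 3 + 1 by norm_num, this]
    apply Finset.sum_congr rfl
    intro k _; ring
  rw [step2] at step1
  exact step1

lemma vg_exp (d : ℕ) :
    (3 : ℝ) ^ ((d : ℝ) / 4) * (4 / 3) ^ d * Real.exp ((d : ℝ) / 8) ≤ 2 ^ d := by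
  set t := (d : ℝ) with ht
  have ht0 : 0 ≤ t := by positivity
  have h1 : Real.exp (t / 8) ≤ ((729 : ℝ) / 256) ^ (t / 8) := by
    rw [← Real.exp_one_rpow (t / 8)]
    apply Real.rpow_le_rpow (Real.exp_pos 1).le _ (by positivity)
    have := Real.exp_one_lt_d9
    linarith
  have h2 : ((729 : ℝ) / 256) ^ (t / 8) = (3 : ℝ) ^ (3 * t / 4) / (2 : ℝ) ^ t := by
    have : ((729 : ℝ) / 256) = (3 : ℝ) ^ (6 : ℝ) / (2 : ℝ) ^ (8 : ℝ) := by
      rw [show ((6:ℝ)) = ((6:ℕ):ℝ) by norm_num, show ((8:ℝ)) = ((8:ℕ):ℝ) by norm_num,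
        Real.rpow_natCast, Real.rpow_natCast]
      norm_num
    rw [this, Real.div_rpow (by positivity) (by positivity),
      ← Real.rpow_mul (by norm_num), ← Real.rpow_mul (by norm_num)]
    ring_nf
  have h43 : ((4 : ℝ) / 3) ^ d = (2 : ℝ) ^ (2 * t) / (3 : ℝ) ^ t := by
    rw [← Real.rpow_natCast ((4:ℝ)/3) d, Real.div_rpow (by norm_num) (by norm_num),
      show ((4:ℝ)) = (2:ℝ)^(2:ℝ) by
        rw [show ((2:ℝ)) = ((2:ℕ):ℝ) by norm_num, Real.rpow_natCast]; norm_num,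
      ← Real.rpow_mul (by norm_num)]
  have h2d : ((2 : ℝ) ^ d : ℝ) = (2 : ℝ) ^ t := by
    rw [← Real.rpow_natCast 2 d]
  rw [h43, h2d]
  calc (3 : ℝ) ^ (t / 4) * ((2:ℝ) ^ (2*t) / (3:ℝ) ^ t) * Real.exp (t / 8)
      ≤ (3 : ℝ) ^ (t / 4) * ((2:ℝ) ^ (2*t) / (3:ℝ) ^ t) * ((3 : ℝ) ^ (3 * t / 4) / (2 : ℝ) ^ t) := by
        apply mul_le_mul_of_nonneg_left (h2 ▸ h1) (by positivity)
    _ = (2 : ℝ) ^ t := by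
        have p2 : (0:ℝ) < 2 := two_pos
        have p3 : (0:ℝ) < 3 := by norm_num
        have e1 : (3:ℝ) ^ (t/4) * (3:ℝ) ^ (3*t/4) = (3:ℝ) ^ t := by
          rw [← Real.rpow_add p3]; ring_nf
        have key : (3:ℝ) ^ (t/4) * ((2:ℝ) ^ (2*t) / (3:ℝ) ^ t) * ((3:ℝ) ^ (3*t/4) / (2:ℝ) ^ t)
            = ((3:ℝ) ^ (t/4) * (3:ℝ) ^ (3*t/4) / (3:ℝ) ^ t) * ((2:ℝ) ^ (2*t) / (2:ℝ) ^ t) := by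
          ring
        rw [key, e1, div_self (ne_of_gt (Real.rpow_pos_of_pos p3 t)), one_mul,
          ← Real.rpow_sub p2, show 2*t - t = t by ring]

lemma vgSigma_injective (d : ℕ) : Function.Injective (vgSigma d) := by
  intro x y h
  funext j
  have hj := congrFun h j
  unfold vgSigma at hj
  cases hx : x j <;> cases hy : y j <;> rw [hx, hy] at hj <;> simp at hj <;> norm_num at hj

lemma vgSigma_ne_iff (d : ℕ) (x y : Fin d → Bool) (j : Fin d) :
    vgSigma d x j ≠ vgSigma d y j ↔ x j ≠ y j := by
  unfold vgSigma
  cases hx : x j <;> cases hy : y j <;> simp <;> norm_num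

theorem varshamov_gilbert_subset
    (d : ℕ) (hd : 4 * 64 ≤ d) (u : Fin d → ℝ) (hu : ∑ j, (u j) ^ 2 = 1) :
    ∃ B : Finset (Fin d → ℝ),
      (∀ ω ∈ B, ∀ j, ω j = 1 ∨ ω j = -1) ∧
      Real.exp ((d : ℝ) / 8) / 2 ≤ (B.card : ℝ) ∧
      (∀ ω ∈ B, |∑ j, u j * ω j| < 2) ∧
      (∀ ω ∈ B, ∀ ω' ∈ B, ω ≠ ω' →
        (d : ℝ) / 4 ≤ ((Finset.univ.filter fun j => ω j ≠ ω' j).card : ℝ)) := by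
  classical
  have hd0 : 0 < d := by omega
  set G := univ.filter (fun x : Fin d → Bool => |∑ j, u j * vgSigma d x j| < 2) with hGdef
  set 𝒮 := G.powerset.filter
    (fun S => ∀ x ∈ S, ∀ y ∈ S, x ≠ y → d ≤ 4 * vgD d x y) with h𝒮
  have hne : 𝒮.Nonempty := ⟨∅, by simp [h𝒮]⟩
  obtain ⟨S, hS𝒮, hSmax⟩ := Finset.exists_max_image 𝒮 Finset.card hne
  rw [h𝒮, Finset.mem_filter, Finset.mem_powerset] at hS𝒮
  obtain ⟨hSG, hSsep⟩ := hS𝒮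
  -- maximality gives covering
  have hcover : ∀ x ∈ G, ∃ s ∈ S, 4 * vgD d s x < d := by
    intro x hx
    by_contra hcon
    push_neg at hcon
    have hxS : x ∉ S := by
      intro hxS
      have h0 := hcon x hxS
      have : vgD d x x = 0 := by unfold vgD; simp
      omega
    have hins : insert x S ∈ 𝒮 := by
      rw [h𝒮, Finset.mem_filter, Finset.mem_powerset]
      refine ⟨Finset.insert_subset hx hSG, ?_⟩
      intro a ha b hb hab
      rcases Finset.mem_insert.mp ha with rfl | haS
      · rcases Finset.mem_insert.mp hb with rfl | hbS
        · exact absurd rfl hab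
        · rw [vgD_symm]; exact hcon b hbS
      · rcases Finset.mem_insert.mp hb with rfl | hbS
        · exact hcon a haS
        · exact hSsep a haS b hbS hab
    have := hSmax _ hins
    rw [Finset.card_insert_of_notMem hxS] at this
    omega
  -- covering card bound
  have hGcard : G.card ≤ S.card * ∑ k ∈ (range (d+1)).filter (fun k => 4*k < d), d.choose k := by
    have hsub : G ⊆ S.biUnion (fun s => univ.filter fun y => 4 * vgD d s y < d) := by
      intro x hx
      obtain ⟨s, hs, hlt⟩ := hcover x hx
      exact Finset.mem_biUnion.mpr ⟨s, hs, by simp [hlt]⟩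
    calc G.card ≤ (S.biUnion (fun s => univ.filter fun y => 4 * vgD d s y < d)).card :=
          Finset.card_le_card hsub
    _ ≤ ∑ s ∈ S, (univ.filter fun y => 4 * vgD d s y < d).card := Finset.card_biUnion_le
    _ ≤ ∑ _s ∈ S, ∑ k ∈ (range (d+1)).filter (fun k => 4*k < d), d.choose k :=
          Finset.sum_le_sum (fun s _ => vg_ball_card d s)
    _ = S.card * ∑ k ∈ (range (d+1)).filter (fun k => 4*k < d), d.choose k := by
          rw [Finset.sum_const, smul_eq_mul]
  -- real chain
  have h1 : (3:ℝ)/4 * 2^d ≤ (G.card : ℝ) := vg_good_card d u hu (vg_second_moment d u)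
  have h2 : (G.card : ℝ) ≤ (S.card : ℝ) * ((3:ℝ)^((d:ℝ)/4) * (4/3)^d) := by
    have hc : (G.card : ℝ) ≤ (S.card : ℝ) *
        ((∑ k ∈ (range (d+1)).filter (fun k => 4*k < d), d.choose k : ℕ) : ℝ) := by
      exact_mod_cast hGcard
    refine hc.trans ?_
    exact mul_le_mul_of_nonneg_left (vg_sum_choose d) (Nat.cast_nonneg _)
  have h3 := vg_exp d
  set E := Real.exp ((d:ℝ)/8) with hE
  set P := (3:ℝ)^((d:ℝ)/4) * (4/3)^d with hP
  have hEpos : 0 < E := Real.exp_pos _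
  have h2d : (0:ℝ) < 2^d := by positivity
  have hScard : E / 2 ≤ (S.card : ℝ) := by
    have hSP : (3:ℝ)/4 * 2^d ≤ (S.card : ℝ) * P := h1.trans h2
    have hA : ((3:ℝ)/4 * 2^d) * E ≤ ((S.card : ℝ) * P) * E :=
      mul_le_mul_of_nonneg_right hSP hEpos.le
    have hB : (S.card : ℝ) * (P * E) ≤ (S.card : ℝ) * 2^d :=
      mul_le_mul_of_nonneg_left h3 (Nat.cast_nonneg _)
    have hC : ((3:ℝ)/4 * E) * 2^d ≤ (S.card : ℝ) * 2^d := by nlinarith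
    have hD : (3:ℝ)/4 * E ≤ (S.card : ℝ) := le_of_mul_le_mul_right hC h2d
    linarith
  refine ⟨S.image (vgSigma d), ?_, ?_, ?_, ?_⟩
  · intro ω hω
    obtain ⟨x, _, rfl⟩ := Finset.mem_image.mp hω
    intro j
    unfold vgSigma
    split
    · exact Or.inl rfl
    · exact Or.inr rfl
  · rw [Finset.card_image_of_injective _ (vgSigma_injective d)]
    exact hScard
  · intro ω hω
    obtain ⟨x, hx, rfl⟩ := Finset.mem_image.mp hω
    have := hSG hx
    rw [hGdef, Finset.mem_filter] at this
    exact this.2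
  · intro ω hω ω' hω' hne'
    obtain ⟨x, hx, rfl⟩ := Finset.mem_image.mp hω
    obtain ⟨y, hy, rfl⟩ := Finset.mem_image.mp hω'
    have hxy : x ≠ y := by intro h; exact hne' (by rw [h])
    have hsep := hSsep x hx y hy hxy
    have hfeq : (univ.filter fun j => vgSigma d x j ≠ vgSigma d y j)
        = univ.filter fun j => x j ≠ y j := by
      apply Finset.filter_congr
      intro j _
      exact vgSigma_ne_iff d x y j
    rw [hfeq]
    have : (d : ℝ) ≤ 4 * ((univ.filter fun j => x j ≠ y j).card : ℝ) := by
      have : (d : ℕ) ≤ 4 * vgD d x y := hsep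
      unfold vgD at this
      exact_mod_cast this
    linarith
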